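/- arXiv:1006.1570 — 2 statements merged into one kernel-verified Lean document; each statement's English description precedes it below -/
import Mathlib

section
/- Let D, A, R, B be nonnegative real random variables such that D is independent of the triple (A, R, B). Then for any θ > 0, γ > 0, ε > 0 and t ∈ ℝ, P( D^{1/γ} A ≥ e^{-t} and D^{1/γ} R^{1/γ} B ≥ e^{-t} ) ≤ e^{2θt} · E[D^{2θ/γ}] · E[R^{(1+ε)θ/γ}]^{1/(1+ε)} · ( E[A^{2(1+ε^{-1})θ}] · E[B^{2(1+ε^{-1})θ}] )^{1/(2(1+ε^{-1}))}, where all expectations take values in [0, ∞] and the right-hand side is interpreted in the extended reals. -/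
open MeasureTheory ProbabilityTheory
open scoped ENNReal

/-- Abstract form of the second case (when one index is an ancestor of the other) of the
paper's Lemma 4.2: if `D` is independent of the triple `(A, R, B)` of nonnegative random
variables, then for `θ, γ, ε > 0` and `t ∈ ℝ`,
`P(D^{1/γ} A ≥ e^{-t}, D^{1/γ} R^{1/γ} B ≥ e^{-t})
  ≤ e^{2θt} E[D^{2θ/γ}] E[R^{(1+ε)θ/γ}]^{1/(1+ε)}
    (E[A^{2(1+ε⁻¹)θ}] E[B^{2(1+ε⁻¹)θ}])^{1/(2(1+ε⁻¹))}`,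
all expectations taken in `[0, ∞]`. -/
theorem stmt_2 {Ω : Type*} [MeasurableSpace Ω] (P : Measure Ω) [IsProbabilityMeasure P]
    (D A R B : Ω → ℝ)
    (hDm : Measurable D) (hAm : Measurable A) (hRm : Measurable R) (hBm : Measurable B)
    (hD0 : ∀ ω, 0 ≤ D ω) (hA0 : ∀ ω, 0 ≤ A ω) (hR0 : ∀ ω, 0 ≤ R ω) (hB0 : ∀ ω, 0 ≤ B ω)
    (hindep : IndepFun D (fun ω => (A ω, R ω, B ω)) P)
    (θ γ ε t : ℝ) (hθ : 0 < θ) (hγ : 0 < γ) (hε : 0 < ε) :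
    P {ω | Real.exp (-t) ≤ D ω ^ (1 / γ) * A ω ∧
           Real.exp (-t) ≤ D ω ^ (1 / γ) * R ω ^ (1 / γ) * B ω}
      ≤ ENNReal.ofReal (Real.exp (2 * θ * t))
        * (∫⁻ ω, ENNReal.ofReal (D ω ^ (2 * θ / γ)) ∂P)
        * (∫⁻ ω, ENNReal.ofReal (R ω ^ ((1 + ε) * θ / γ)) ∂P) ^ (1 / (1 + ε))
        * ((∫⁻ ω, ENNReal.ofReal (A ω ^ (2 * (1 + ε⁻¹) * θ)) ∂P)
            * (∫⁻ ω, ENNReal.ofReal (B ω ^ (2 * (1 + ε⁻¹) * θ)) ∂P)) ^ (1 / (2 * (1 + ε⁻¹))) := by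
  have hθγ : 0 ≤ θ / γ := (div_pos hθ hγ).le
  have hq : (0:ℝ) < 1 + ε⁻¹ := by positivity
  -- the ENNReal-valued functions
  set fD : Ω → ℝ≥0∞ := fun ω => ENNReal.ofReal (D ω ^ (2 * θ / γ)) with hfD
  set fR : Ω → ℝ≥0∞ := fun ω => ENNReal.ofReal (R ω ^ (θ / γ)) with hfR
  set fA : Ω → ℝ≥0∞ := fun ω => ENNReal.ofReal (A ω ^ θ) with hfA
  set fB : Ω → ℝ≥0∞ := fun ω => ENNReal.ofReal (B ω ^ θ) with hfB
  have hfDm : Measurable fD := by fun_prop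
  have hfRm : Measurable fR := by fun_prop
  have hfAm : Measurable fA := by fun_prop
  have hfBm : Measurable fB := by fun_prop
  set g : Ω → ℝ≥0∞ := fun ω => fD ω * (fR ω * (fA ω * fB ω)) with hg
  have hgm : Measurable g := hfDm.mul ((hfRm.mul (hfAm.mul hfBm)))
  -- pointwise: on the event, exp (-(2*θ*t)) ≤ g
  have hsub : {ω | Real.exp (-t) ≤ D ω ^ (1 / γ) * A ω ∧
             Real.exp (-t) ≤ D ω ^ (1 / γ) * R ω ^ (1 / γ) * B ω}
      ⊆ {ω | ENNReal.ofReal (Real.exp (-t * (2 * θ))) ≤ g ω} := by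
    intro ω hω
    obtain ⟨h1, h2⟩ := hω
    have hD := hD0 ω; have hA := hA0 ω; have hR := hR0 ω; have hB := hB0 ω
    have k1 : Real.exp (-t) ^ θ ≤ (D ω ^ (1 / γ) * A ω) ^ θ :=
      Real.rpow_le_rpow (Real.exp_pos _).le h1 hθ.le
    have k2 : Real.exp (-t) ^ θ ≤ (D ω ^ (1 / γ) * R ω ^ (1 / γ) * B ω) ^ θ :=
      Real.rpow_le_rpow (Real.exp_pos _).le h2 hθ.le
    have key : Real.exp (-t) ^ θ * Real.exp (-t) ^ θ
        ≤ D ω ^ (2 * θ / γ) * (R ω ^ (θ / γ) * (A ω ^ θ * B ω ^ θ)) := by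
      have e1 : (D ω ^ (1 / γ) * A ω) ^ θ = D ω ^ (θ / γ) * A ω ^ θ := by
        rw [Real.mul_rpow (Real.rpow_nonneg hD _) hA, ← Real.rpow_mul hD]
        ring_nf
      have e2 : (D ω ^ (1 / γ) * R ω ^ (1 / γ) * B ω) ^ θ
          = D ω ^ (θ / γ) * R ω ^ (θ / γ) * B ω ^ θ := by
        rw [Real.mul_rpow (mul_nonneg (Real.rpow_nonneg hD _) (Real.rpow_nonneg hR _)) hB,
          Real.mul_rpow (Real.rpow_nonneg hD _) (Real.rpow_nonneg hR _),
          ← Real.rpow_mul hD, ← Real.rpow_mul hR]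
        ring_nf
      calc Real.exp (-t) ^ θ * Real.exp (-t) ^ θ
          ≤ (D ω ^ (1 / γ) * A ω) ^ θ * (D ω ^ (1 / γ) * R ω ^ (1 / γ) * B ω) ^ θ := by
            apply mul_le_mul k1 k2 (Real.rpow_nonneg (Real.exp_pos _).le _)
              (Real.rpow_nonneg (mul_nonneg (Real.rpow_nonneg hD _) hA) _)
        _ = D ω ^ (2 * θ / γ) * (R ω ^ (θ / γ) * (A ω ^ θ * B ω ^ θ)) := by
            have dd : D ω ^ (2 * θ / γ) = D ω ^ (θ / γ) * D ω ^ (θ / γ) := by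
              rw [show 2 * θ / γ = θ / γ + θ / γ by ring,
                Real.rpow_add_of_nonneg hD hθγ hθγ]
            rw [e1, e2, dd]; ring
    have lhs_eq : Real.exp (-t * (2 * θ)) = Real.exp (-t) ^ θ * Real.exp (-t) ^ θ := by
      rw [← Real.exp_mul, ← Real.exp_add]
      congr 1; ring
    show ENNReal.ofReal (Real.exp (-t * (2 * θ))) ≤ g ω
    rw [lhs_eq, hg]
    calc ENNReal.ofReal (Real.exp (-t) ^ θ * Real.exp (-t) ^ θ)
        ≤ ENNReal.ofReal (D ω ^ (2 * θ / γ) * (R ω ^ (θ / γ) * (A ω ^ θ * B ω ^ θ))) :=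
          ENNReal.ofReal_le_ofReal key
      _ = fD ω * (fR ω * (fA ω * fB ω)) := by
          rw [ENNReal.ofReal_mul (Real.rpow_nonneg hD _),
            ENNReal.ofReal_mul (Real.rpow_nonneg hR _),
            ENNReal.ofReal_mul (Real.rpow_nonneg hA _)]
  -- Markov
  have hexp_pos : (0:ℝ) < Real.exp (-t * (2 * θ)) := Real.exp_pos _
  have markov : P {ω | Real.exp (-t) ≤ D ω ^ (1 / γ) * A ω ∧
             Real.exp (-t) ≤ D ω ^ (1 / γ) * R ω ^ (1 / γ) * B ω}
      ≤ ENNReal.ofReal (Real.exp (2 * θ * t)) * ∫⁻ ω, g ω ∂P := by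
    have h1 := mul_meas_ge_le_lintegral (μ := P) hgm (ENNReal.ofReal (Real.exp (-t * (2 * θ))))
    have h2 : P {ω | Real.exp (-t) ≤ D ω ^ (1 / γ) * A ω ∧
             Real.exp (-t) ≤ D ω ^ (1 / γ) * R ω ^ (1 / γ) * B ω}
        ≤ P {ω | ENNReal.ofReal (Real.exp (-t * (2 * θ))) ≤ g ω} := measure_mono hsub
    have ha0 : ENNReal.ofReal (Real.exp (-t * (2 * θ))) ≠ 0 :=
      (ENNReal.ofReal_pos.mpr hexp_pos).ne'
    have hainv : (ENNReal.ofReal (Real.exp (-t * (2 * θ))))⁻¹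
        = ENNReal.ofReal (Real.exp (2 * θ * t)) := by
      rw [← ENNReal.ofReal_inv_of_pos hexp_pos, ← Real.exp_neg]
      ring_nf
    calc P _ ≤ P {ω | ENNReal.ofReal (Real.exp (-t * (2 * θ))) ≤ g ω} := h2
      _ = (ENNReal.ofReal (Real.exp (-t * (2 * θ))))⁻¹
          * (ENNReal.ofReal (Real.exp (-t * (2 * θ)))
            * P {ω | ENNReal.ofReal (Real.exp (-t * (2 * θ))) ≤ g ω}) := by
          rw [← mul_assoc (ENNReal.ofReal (Real.exp (-t * (2 * θ))))⁻¹,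
            ENNReal.inv_mul_cancel ha0 ENNReal.ofReal_ne_top, one_mul]
      _ ≤ (ENNReal.ofReal (Real.exp (-t * (2 * θ))))⁻¹ * ∫⁻ ω, g ω ∂P := by
          exact mul_le_mul_right h1 _
      _ = ENNReal.ofReal (Real.exp (2 * θ * t)) * ∫⁻ ω, g ω ∂P := by rw [hainv]
  -- independence splits the integral
  have hsplit : ∫⁻ ω, g ω ∂P
      = (∫⁻ ω, fD ω ∂P) * ∫⁻ ω, fR ω * (fA ω * fB ω) ∂P := by
    have hφ : Measurable fun x : ℝ => ENNReal.ofReal (x ^ (2 * θ / γ)) := by fun_prop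
    have hψ : Measurable fun p : ℝ × ℝ × ℝ =>
        ENNReal.ofReal (p.2.1 ^ (θ / γ)) * (ENNReal.ofReal (p.1 ^ θ) * ENNReal.ofReal (p.2.2 ^ θ)) := by
      fun_prop
    have hind2 : IndepFun fD (fun ω => fR ω * (fA ω * fB ω)) P := hindep.comp hφ hψ
    exact lintegral_mul_eq_lintegral_mul_lintegral_of_indepFun hfDm
      (hfRm.mul (hfAm.mul hfBm)) hind2
  -- Hölder with exponents (1+ε, 1+ε⁻¹)
  have hpq : Real.HolderConjugate (1 + ε) (1 + ε⁻¹) := by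
    rw [Real.holderConjugate_iff]
    constructor
    · linarith
    · field_simp
      ring
  have holder1 : ∫⁻ ω, fR ω * (fA ω * fB ω) ∂P
      ≤ (∫⁻ ω, fR ω ^ (1 + ε) ∂P) ^ (1 / (1 + ε))
        * (∫⁻ ω, (fA ω * fB ω) ^ (1 + ε⁻¹) ∂P) ^ (1 / (1 + ε⁻¹)) :=
    ENNReal.lintegral_mul_le_Lp_mul_Lq P hpq hfRm.aemeasurable
      ((hfAm.mul hfBm)).aemeasurable
  -- identify the first Hölder factor
  have hR_eq : ∫⁻ ω, fR ω ^ (1 + ε) ∂P = ∫⁻ ω, ENNReal.ofReal (R ω ^ ((1 + ε) * θ / γ)) ∂P := by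
    apply lintegral_congr
    intro ω
    show ENNReal.ofReal (R ω ^ (θ / γ)) ^ (1 + ε) = ENNReal.ofReal (R ω ^ ((1 + ε) * θ / γ))
    rw [ENNReal.ofReal_rpow_of_nonneg (Real.rpow_nonneg (hR0 ω) _) (by linarith),
      ← Real.rpow_mul (hR0 ω)]
    congr 1; ring
  -- Cauchy–Schwarz on the second Hölder factor
  have hAB_eq : ∫⁻ ω, (fA ω * fB ω) ^ (1 + ε⁻¹) ∂P
      = ∫⁻ ω, ENNReal.ofReal (A ω ^ ((1 + ε⁻¹) * θ)) * ENNReal.ofReal (B ω ^ ((1 + ε⁻¹) * θ)) ∂P := by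
    apply lintegral_congr
    intro ω
    show (ENNReal.ofReal (A ω ^ θ) * ENNReal.ofReal (B ω ^ θ)) ^ (1 + ε⁻¹)
        = ENNReal.ofReal (A ω ^ ((1 + ε⁻¹) * θ)) * ENNReal.ofReal (B ω ^ ((1 + ε⁻¹) * θ))
    rw [ENNReal.mul_rpow_of_nonneg _ _ hq.le,
      ENNReal.ofReal_rpow_of_nonneg (Real.rpow_nonneg (hA0 ω) _) hq.le,
      ENNReal.ofReal_rpow_of_nonneg (Real.rpow_nonneg (hB0 ω) _) hq.le,
      ← Real.rpow_mul (hA0 ω), ← Real.rpow_mul (hB0 ω)]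
    rw [show θ * (1 + ε⁻¹) = (1 + ε⁻¹) * θ by ring]
  have h22 : Real.HolderConjugate 2 2 := by
    rw [Real.holderConjugate_iff]
    constructor
    · norm_num
    · norm_num
  have cs : ∫⁻ ω, ENNReal.ofReal (A ω ^ ((1 + ε⁻¹) * θ)) * ENNReal.ofReal (B ω ^ ((1 + ε⁻¹) * θ)) ∂P
      ≤ ((∫⁻ ω, ENNReal.ofReal (A ω ^ (2 * (1 + ε⁻¹) * θ)) ∂P)
          * (∫⁻ ω, ENNReal.ofReal (B ω ^ (2 * (1 + ε⁻¹) * θ)) ∂P)) ^ ((1:ℝ) / 2) := by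
    have := ENNReal.lintegral_mul_le_Lp_mul_Lq P h22
      (f := fun ω => ENNReal.ofReal (A ω ^ ((1 + ε⁻¹) * θ)))
      (g := fun ω => ENNReal.ofReal (B ω ^ ((1 + ε⁻¹) * θ)))
      (by fun_prop) (by fun_prop)
    have eA : ∫⁻ ω, (ENNReal.ofReal (A ω ^ ((1 + ε⁻¹) * θ))) ^ (2:ℝ) ∂P
        = ∫⁻ ω, ENNReal.ofReal (A ω ^ (2 * (1 + ε⁻¹) * θ)) ∂P := by
      apply lintegral_congr; intro ω
      show ENNReal.ofReal (A ω ^ ((1 + ε⁻¹) * θ)) ^ (2:ℝ) = ENNReal.ofReal (A ω ^ (2 * (1 + ε⁻¹) * θ))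
      rw [ENNReal.ofReal_rpow_of_nonneg (Real.rpow_nonneg (hA0 ω) _) (by norm_num),
        ← Real.rpow_mul (hA0 ω)]
      congr 1; ring
    have eB : ∫⁻ ω, (ENNReal.ofReal (B ω ^ ((1 + ε⁻¹) * θ))) ^ (2:ℝ) ∂P
        = ∫⁻ ω, ENNReal.ofReal (B ω ^ (2 * (1 + ε⁻¹) * θ)) ∂P := by
      apply lintegral_congr; intro ω
      show ENNReal.ofReal (B ω ^ ((1 + ε⁻¹) * θ)) ^ (2:ℝ) = ENNReal.ofReal (B ω ^ (2 * (1 + ε⁻¹) * θ))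
      rw [ENNReal.ofReal_rpow_of_nonneg (Real.rpow_nonneg (hB0 ω) _) (by norm_num),
        ← Real.rpow_mul (hB0 ω)]
      congr 1; ring
    calc ∫⁻ ω, ENNReal.ofReal (A ω ^ ((1 + ε⁻¹) * θ)) * ENNReal.ofReal (B ω ^ ((1 + ε⁻¹) * θ)) ∂P
        ≤ (∫⁻ ω, (ENNReal.ofReal (A ω ^ ((1 + ε⁻¹) * θ))) ^ (2:ℝ) ∂P) ^ ((1:ℝ)/2)
          * (∫⁻ ω, (ENNReal.ofReal (B ω ^ ((1 + ε⁻¹) * θ))) ^ (2:ℝ) ∂P) ^ ((1:ℝ)/2) := this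
      _ = ((∫⁻ ω, ENNReal.ofReal (A ω ^ (2 * (1 + ε⁻¹) * θ)) ∂P)
          * (∫⁻ ω, ENNReal.ofReal (B ω ^ (2 * (1 + ε⁻¹) * θ)) ∂P)) ^ ((1:ℝ) / 2) := by
          rw [eA, eB, ENNReal.mul_rpow_of_nonneg _ _ (by norm_num : (0:ℝ) ≤ 1/2)]
  -- assemble
  set ID := ∫⁻ ω, ENNReal.ofReal (D ω ^ (2 * θ / γ)) ∂P
  set IR := ∫⁻ ω, ENNReal.ofReal (R ω ^ ((1 + ε) * θ / γ)) ∂P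
  set IA := ∫⁻ ω, ENNReal.ofReal (A ω ^ (2 * (1 + ε⁻¹) * θ)) ∂P
  set IB := ∫⁻ ω, ENNReal.ofReal (B ω ^ (2 * (1 + ε⁻¹) * θ)) ∂P
  have step2 : ∫⁻ ω, fR ω * (fA ω * fB ω) ∂P
      ≤ IR ^ (1 / (1 + ε)) * (IA * IB) ^ (1 / (2 * (1 + ε⁻¹))) := by
    refine holder1.trans ?_
    rw [hR_eq]
    apply mul_le_mul_right
    rw [hAB_eq]
    calc (∫⁻ ω, ENNReal.ofReal (A ω ^ ((1 + ε⁻¹) * θ)) * ENNReal.ofReal (B ω ^ ((1 + ε⁻¹) * θ)) ∂P)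
          ^ (1 / (1 + ε⁻¹))
        ≤ (((IA * IB) ^ ((1:ℝ)/2)) : ℝ≥0∞) ^ (1 / (1 + ε⁻¹)) :=
          ENNReal.rpow_le_rpow cs (by positivity)
      _ = (IA * IB) ^ (1 / (2 * (1 + ε⁻¹))) := by
          rw [← ENNReal.rpow_mul]
          congr 1
          field_simp
  calc P _ ≤ ENNReal.ofReal (Real.exp (2 * θ * t)) * ∫⁻ ω, g ω ∂P := markov
    _ = ENNReal.ofReal (Real.exp (2 * θ * t)) * (ID * ∫⁻ ω, fR ω * (fA ω * fB ω) ∂P) := by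
        rw [hsplit]
    _ ≤ ENNReal.ofReal (Real.exp (2 * θ * t))
        * (ID * (IR ^ (1 / (1 + ε)) * (IA * IB) ^ (1 / (2 * (1 + ε⁻¹))))) := by
        exact mul_le_mul_right (mul_le_mul_right step2 _) _
    _ = ENNReal.ofReal (Real.exp (2 * θ * t)) * ID * IR ^ (1 / (1 + ε))
        * (IA * IB) ^ (1 / (2 * (1 + ε⁻¹))) := by ring
end

section
/- Let (T, d) be a metric space with finite diameter diam(T) := sup_{x,y∈T} d(x,y), let μ be a finite Borel measure on T, let λ > 0, and let f : T → ℝ be a Borel measurable, μ-square-integrable function with ∫_T f dμ = 0 and ∫_T f² dμ > 0. Suppose that for every x, y ∈ T one has (f(x) − f(y))² ≤ λ · (∫_T f² dμ) · d(x, y). Then λ · diam(T) · μ(T) ≥ 1, i.e. λ ≥ 1 / (diam(T) · μ(T)). -/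
open MeasureTheory

/-- Neumann case of the paper's Lemma 2.2: if `f` is square-integrable with `∫ f dμ = 0` and
`∫ f² dμ > 0` on a bounded metric space `T` with finite Borel measure `μ`, and
`(f(x) − f(y))² ≤ λ (∫ f² dμ) d(x, y)` for all `x, y`, then `λ · diam(T) · μ(T) ≥ 1`. -/
theorem stmt_4 {T : Type*} [MetricSpace T] [MeasurableSpace T] [BorelSpace T]
    (hbdd : Bornology.IsBounded (Set.univ : Set T))
    (μ : Measure T) [IsFiniteMeasure μ]
    (lam : ℝ) (hlam : 0 < lam) (f : T → ℝ) (hfm : Measurable f)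
    (hf1 : Integrable f μ) (hf2 : Integrable (fun x => f x ^ 2) μ)
    (hmean : ∫ x, f x ∂μ = 0)
    (hpos : 0 < ∫ x, f x ^ 2 ∂μ)
    (hineq : ∀ x y, (f x - f y) ^ 2 ≤ lam * (∫ x, f x ^ 2 ∂μ) * dist x y) :
    1 ≤ lam * Metric.diam (Set.univ : Set T) * (μ Set.univ).toReal := by
  set I : ℝ := ∫ x, f x ^ 2 ∂μ with hI
  -- there is a point where f ≤ 0
  have hy0 : ∃ y, f y ≤ 0 := by
    by_contra h
    push_neg at h
    have hnn : 0 ≤ f := fun x => (h x).le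
    have hz : f =ᵐ[μ] 0 :=
      (integral_eq_zero_iff_of_nonneg hnn hf1).mp hmean
    have hz2 : (fun x => f x ^ 2) =ᵐ[μ] fun _ => (0 : ℝ) := hz.mono fun x hx => by
      simp only [Pi.zero_apply] at hx; simp [hx]
    have : I = 0 := by rw [hI, integral_congr_ae hz2]; simp
    linarith
  have hy1 : ∃ y, 0 ≤ f y := by
    by_contra h
    push_neg at h
    have hnn : 0 ≤ (fun x => -f x) := fun x => by
      simp only [Pi.zero_apply]; linarith [h x]
    have hz : (fun x => -f x) =ᵐ[μ] 0 := by
      refine (integral_eq_zero_iff_of_nonneg hnn hf1.neg).mp ?_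
      rw [show (fun x => -f x) = fun x => -(f x) from rfl, integral_neg, hmean, neg_zero]
    have hz2 : (fun x => f x ^ 2) =ᵐ[μ] fun _ => (0 : ℝ) := hz.mono fun x hx => by
      simp only [Pi.zero_apply] at hx
      have : f x = 0 := by linarith [hx]
      simp [this]
    have : I = 0 := by rw [hI, integral_congr_ae hz2]; simp
    linarith
  obtain ⟨y0, hy0⟩ := hy0
  obtain ⟨y1, hy1⟩ := hy1
  set D : ℝ := Metric.diam (Set.univ : Set T)
  -- pointwise bound
  have hpt : ∀ x, f x ^ 2 ≤ lam * I * D := by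
    intro x
    rcases le_or_gt 0 (f x) with hx | hx
    · have h1 : f x ^ 2 ≤ (f x - f y0) ^ 2 := by nlinarith
      have h2 := hineq x y0
      have h3 : dist x y0 ≤ D :=
        Metric.dist_le_diam_of_mem hbdd (Set.mem_univ _) (Set.mem_univ _)
      have h4 : lam * I * dist x y0 ≤ lam * I * D := by
        apply mul_le_mul_of_nonneg_left h3 (by positivity)
      linarith
    · have h1 : f x ^ 2 ≤ (f x - f y1) ^ 2 := by nlinarith
      have h2 := hineq x y1
      have h3 : dist x y1 ≤ D :=
        Metric.dist_le_diam_of_mem hbdd (Set.mem_univ _) (Set.mem_univ _)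
      have h4 : lam * I * dist x y1 ≤ lam * I * D := by
        apply mul_le_mul_of_nonneg_left h3 (by positivity)
      linarith
  have hint : I ≤ (lam * I * D) * (μ Set.univ).toReal := by
    calc I = ∫ x, f x ^ 2 ∂μ := hI
    _ ≤ ∫ _x, lam * I * D ∂μ :=
        integral_mono hf2 (integrable_const _) hpt
    _ = (lam * I * D) * (μ Set.univ).toReal := by
        simp [integral_const, smul_eq_mul, mul_comm, Measure.real]
  have : I * 1 ≤ I * (lam * D * (μ Set.univ).toReal) := by ring_nf; ring_nf at hint; linarith
  have := le_of_mul_le_mul_left this hpos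
  linarith
end
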